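/- (Separation of top-two collapse and rank collapse at bounded contact-count entropy.) For n ≥ 3 define scores z_{n,1} = 0, z_{n,2} = −(log 2)/(log n), and z_{n,j} = −log n for 3 ≤ j ≤ n, and set β_n := √(log n). Then: (i) Λ_n = log n, so β_n/Λ_n → 0; (ii) Z_n(β_n) → 2 as n → ∞; (iii) the top-two weight gap satisfies D_n(β_n) → 0; and (iv) the rank gap satisfies G_n(β_n) := max_{i,j} |p_{n,i}(β_n) − p_{n,j}(β_n)| → 1/2, so rank collapse fails even though top-two collapse holds. -/

import Mathlib

open Filter MeasureTheory
open scoped ENNReal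

/-- Maximum score `z_n^*`. -/
noncomputable def zmax (n : ℕ) (z : Fin n → ℝ) : ℝ := sSup (Set.range z)

/-- Gap `g_{n,j} = z_n^* - z_{n,j}`. -/
noncomputable def gap (n : ℕ) (z : Fin n → ℝ) (j : Fin n) : ℝ := zmax n z - z j

/-- Cumulative gap-counting function `N_n(t)`. -/
noncomputable def Ncount (n : ℕ) (z : Fin n → ℝ) (t : ℝ) : ℕ :=
  {j : Fin n | gap n z j ≤ t}.ncard

/-- Normalised partition function `Z_n(β)`. -/
noncomputable def Zfun (n : ℕ) (z : Fin n → ℝ) (β : ℝ) : ℝ :=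
  ∑ j : Fin n, Real.exp (-(β * gap n z j))

/-- Softmax probabilities `p_{n,j}(β)`. -/
noncomputable def softmaxP (n : ℕ) (z : Fin n → ℝ) (β : ℝ) (j : Fin n) : ℝ :=
  Real.exp (β * z j) / ∑ ℓ : Fin n, Real.exp (β * z ℓ)

/-- Shannon entropy `H_n(β)`. -/
noncomputable def entropyH (n : ℕ) (z : Fin n → ℝ) (β : ℝ) : ℝ :=
  -∑ j : Fin n, softmaxP n z β j * Real.log (softmaxP n z β j)

/-- The set of values `log N_n(t) / t` over `t > 0`, whose supremum is `Λ_n`. -/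
def lamSet (n : ℕ) (z : Fin n → ℝ) : Set ℝ :=
  {r | ∃ t : ℝ, 0 < t ∧ r = Real.log (Ncount n z t) / t}

/-- Second-largest entry of a finite vector (equals the largest in case of ties). -/
noncomputable def secondLargest (n : ℕ) (v : Fin n → ℝ) : ℝ :=
  sInf (Set.range fun i => sSup (v '' {j | j ≠ i}))

/-- Top-two weight gap `D_n(β)`. -/
noncomputable def Dgap (n : ℕ) (z : Fin n → ℝ) (β : ℝ) : ℝ :=
  sSup (Set.range (softmaxP n z β)) - secondLargest n (softmaxP n z β)

/-- Rank gap `G_n(β) = max_{i,j} |p_{n,i}(β) - p_{n,j}(β)|`. -/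
noncomputable def Ggap (n : ℕ) (z : Fin n → ℝ) (β : ℝ) : ℝ :=
  sSup {x | ∃ i j : Fin n, x = |softmaxP n z β i - softmaxP n z β j|}

/-- Resolved accumulation scale `Λ_n^{(r)}` (with `sup ∅ = 0`), valued in `ℝ≥0∞`. -/
noncomputable def resolvedLam (n : ℕ) (z : Fin n → ℝ) (r : ℝ) : ℝ≥0∞ :=
  ⨆ t ∈ {t : ℝ | 0 < t ∧ r < Real.log (Ncount n z t)},
    ENNReal.ofReal ((Real.log (Ncount n z t) - r) / t)

/-- Laplace envelope `S_n(β) = sup_{t ≥ 0} (log N_n(t) - β t)`. -/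
noncomputable def Sfun (n : ℕ) (z : Fin n → ℝ) (β : ℝ) : ℝ :=
  sSup {x | ∃ t : ℝ, 0 ≤ t ∧ x = Real.log (Ncount n z t) - β * t}

/-- Rank boundary `B_n^rank(r) = sup {β ≥ 0 : log Z_n(β) ≥ r}`, valued in `ℝ≥0∞`. -/
noncomputable def rankBoundary (n : ℕ) (z : Fin n → ℝ) (r : ℝ) : ℝ≥0∞ :=
  ⨆ β ∈ {β : ℝ | 0 ≤ β ∧ r ≤ Real.log (Zfun n z β)}, ENNReal.ofReal β

/-- `X_n ≍ (log n)^ξ`. -/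
def IsLogAsymp (X : ℕ → ℝ) (ξ : ℝ) : Prop :=
  ∃ c₁ c₂ : ℝ, 0 < c₁ ∧ c₁ ≤ c₂ ∧
    ∀ᶠ n : ℕ in Filter.atTop,
      c₁ * Real.log n ^ ξ ≤ X n ∧ X n ≤ c₂ * Real.log n ^ ξ

/-- The score family of the finite-contact example: `z_{n,1} = 0`,
`z_{n,2} = -(log 2)/(log n)`, `z_{n,j} = -log n` for `j ≥ 3`. -/
noncomputable def zex (n : ℕ) : Fin n → ℝ := fun j =>
  if (j : ℕ) = 0 then 0
  else if (j : ℕ) = 1 then -(Real.log 2 / Real.log n)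
  else -Real.log n

section A
variable {n : ℕ}

lemma one_lt_log (hn : 3 ≤ n) : 1 < Real.log n := by
  have h3 : (3:ℝ) ≤ n := by exact_mod_cast hn
  have he : Real.exp 1 < (n:ℝ) := by
    have := Real.exp_one_lt_d9; linarith
  calc 1 = Real.log (Real.exp 1) := (Real.log_exp 1).symm
    _ < Real.log n := Real.log_lt_log (Real.exp_pos 1) he

lemma log2_pos : 0 < Real.log 2 := Real.log_pos one_lt_two

lemma log2_lt_one : Real.log 2 < 1 := by
  have he : (2:ℝ) < Real.exp 1 := by have := Real.exp_one_gt_d9; linarith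
  calc Real.log 2 < Real.log (Real.exp 1) := Real.log_lt_log two_pos he
    _ = 1 := Real.log_exp 1

lemma g2_pos (hn : 3 ≤ n) : 0 < Real.log 2 / Real.log n :=
  div_pos log2_pos (by linarith [one_lt_log hn])

lemma g2_lt (hn : 3 ≤ n) : Real.log 2 / Real.log n < Real.log n := by
  have hL := one_lt_log hn
  rw [div_lt_iff₀ (by linarith)]
  nlinarith [log2_lt_one]

lemma zmax_zex (hn : 3 ≤ n) : zmax n (zex n) = 0 := by
  apply IsGreatest.csSup_eq
  constructor
  · exact ⟨⟨0, by omega⟩, by simp [zex]⟩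
  · rintro y ⟨j, rfl⟩
    have hL := one_lt_log hn
    have h2 := g2_pos hn
    unfold zex
    split_ifs <;> linarith

lemma gap_zex (hn : 3 ≤ n) (j : Fin n) :
    gap n (zex n) j = if (j : ℕ) = 0 then 0
      else if (j : ℕ) = 1 then Real.log 2 / Real.log n else Real.log n := by
  unfold gap
  rw [zmax_zex hn]
  unfold zex
  split_ifs <;> ring

lemma gap_nonneg (hn : 3 ≤ n) (j : Fin n) : 0 ≤ gap n (zex n) j := by
  rw [gap_zex hn]
  have := g2_pos hn; have := one_lt_log hn
  split_ifs <;> linarith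

lemma gap_le (hn : 3 ≤ n) (j : Fin n) : gap n (zex n) j ≤ Real.log n := by
  rw [gap_zex hn]
  have := g2_lt hn; have := one_lt_log hn
  split_ifs <;> linarith
end A

section B
variable {n : ℕ}

lemma Ncount_le_n (z : Fin n → ℝ) (t : ℝ) : Ncount n z t ≤ n := by
  unfold Ncount
  calc {j : Fin n | gap n z j ≤ t}.ncard ≤ (Set.univ : Set (Fin n)).ncard :=
        Set.ncard_le_ncard (Set.subset_univ _) Set.finite_univ
    _ = n := by rw [Set.ncard_univ]; simp

lemma Ncount_le_two (hn : 3 ≤ n) {t : ℝ} (ht : t < Real.log n) :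
    Ncount n (zex n) t ≤ 2 := by
  unfold Ncount
  have hsub : {j : Fin n | gap n (zex n) j ≤ t} ⊆ {(⟨0, by omega⟩ : Fin n), ⟨1, by omega⟩} := by
    intro j hj
    simp only [Set.mem_setOf_eq, gap_zex hn] at hj
    simp only [Set.mem_insert_iff, Set.mem_singleton_iff]
    by_cases h0 : (j:ℕ) = 0
    · left; exact Fin.ext h0
    by_cases h1 : (j:ℕ) = 1
    · right; exact Fin.ext h1
    · simp [h0, h1] at hj; linarith
  calc {j : Fin n | gap n (zex n) j ≤ t}.ncard ≤ _ := Set.ncard_le_ncard hsub (Set.toFinite _)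
    _ ≤ 2 := by
      refine le_trans (Set.ncard_insert_le _ _) ?_
      simp

lemma Ncount_le_one (hn : 3 ≤ n) {t : ℝ} (ht : t < Real.log 2 / Real.log n) :
    Ncount n (zex n) t ≤ 1 := by
  unfold Ncount
  have hg2 := g2_lt hn
  have hsub : {j : Fin n | gap n (zex n) j ≤ t} ⊆ {(⟨0, by omega⟩ : Fin n)} := by
    intro j hj
    simp only [Set.mem_setOf_eq, gap_zex hn] at hj
    simp only [Set.mem_singleton_iff]
    by_cases h0 : (j:ℕ) = 0
    · exact Fin.ext h0
    by_cases h1 : (j:ℕ) = 1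
    · simp [h0, h1] at hj; linarith
    · simp [h0, h1] at hj; linarith
  calc {j : Fin n | gap n (zex n) j ≤ t}.ncard ≤ _ := Set.ncard_le_ncard hsub (Set.toFinite _)
    _ ≤ 1 := by simp

lemma Ncount_at_g2 (hn : 3 ≤ n) :
    Ncount n (zex n) (Real.log 2 / Real.log n) = 2 := by
  unfold Ncount
  have hg2p := g2_pos hn
  have hg2 := g2_lt hn
  have hset : {j : Fin n | gap n (zex n) j ≤ Real.log 2 / Real.log n}
      = {(⟨0, by omega⟩ : Fin n), ⟨1, by omega⟩} := by
    ext j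
    simp only [Set.mem_setOf_eq, gap_zex hn, Set.mem_insert_iff, Set.mem_singleton_iff]
    constructor
    · intro hj
      by_cases h0 : (j:ℕ) = 0
      · left; exact Fin.ext h0
      by_cases h1 : (j:ℕ) = 1
      · right; exact Fin.ext h1
      · simp [h0, h1] at hj; linarith
    · rintro (rfl | rfl) <;> simp <;> linarith
  rw [hset, Set.ncard_pair (by simp [Fin.ext_iff])]

lemma isLUB_lamSet (hn : 3 ≤ n) :
    IsLUB {r | ∃ t : ℝ, 0 < t ∧ r = Real.log (Ncount n (zex n) t) / t} (Real.log n) := by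
  have hL := one_lt_log hn
  have hg2p := g2_pos hn
  have hg2 := g2_lt hn
  apply IsGreatest.isLUB
  constructor
  · -- membership: attained at t = log 2 / log n
    refine ⟨Real.log 2 / Real.log n, hg2p, ?_⟩
    rw [Ncount_at_g2 hn]
    rw [div_div_eq_mul_div, eq_div_iff (ne_of_gt log2_pos)]
    ring
  · rintro r ⟨t, ht, rfl⟩
    rw [div_le_iff₀ ht]
    rcases le_or_gt (Real.log n) t with h | h
    · -- N ≤ n
      have h1 : (Ncount n (zex n) t : ℝ) ≤ n := by exact_mod_cast Ncount_le_n (zex n) t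
      have h2 : Real.log (Ncount n (zex n) t) ≤ Real.log n := by
        rcases Nat.eq_zero_or_pos (Ncount n (zex n) t) with h0 | h0
        · simp [h0]; positivity
        · exact Real.log_le_log (by exact_mod_cast h0) h1
      nlinarith
    rcases le_or_gt (Real.log 2 / Real.log n) t with h' | h'
    · have h1 : (Ncount n (zex n) t : ℝ) ≤ 2 := by exact_mod_cast Ncount_le_two hn h
      have h2 : Real.log (Ncount n (zex n) t) ≤ Real.log 2 := by
        rcases Nat.eq_zero_or_pos (Ncount n (zex n) t) with h0 | h0
        · simp [h0]; exact le_of_lt log2_pos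
        · exact Real.log_le_log (by exact_mod_cast h0) h1
      have : Real.log 2 ≤ Real.log n * t := by
        rw [div_le_iff₀ (by linarith)] at h'
        nlinarith
      linarith
    · have h1 : (Ncount n (zex n) t : ℝ) ≤ 1 := by exact_mod_cast Ncount_le_one hn h'
      have h2 : Real.log (Ncount n (zex n) t) ≤ 0 := by
        rcases Nat.eq_zero_or_pos (Ncount n (zex n) t) with h0 | h0
        · simp [h0]
        · exact Real.log_nonpos (by positivity) h1
      nlinarith
end B

section C
variable {n : ℕ}

lemma Zfun_eq (hn : 3 ≤ n) (β : ℝ) :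
    Zfun n (zex n) β = 1 + Real.exp (-(β * (Real.log 2 / Real.log n)))
      + ((n:ℝ) - 2) * Real.exp (-(β * Real.log n)) := by
  classical
  set C := Real.exp (-(β * Real.log n)) with hC
  set b := Real.exp (-(β * (Real.log 2 / Real.log n))) with hb
  have key : ∀ j : Fin n, Real.exp (-(β * gap n (zex n) j)) =
      C + ((if j = (⟨0, by omega⟩ : Fin n) then 1 - C else 0)
        + (if j = (⟨1, by omega⟩ : Fin n) then b - C else 0)) := by
    intro j
    rw [gap_zex hn]
    by_cases h0 : (j:ℕ) = 0
    · have hj : j = (⟨0, by omega⟩ : Fin n) := Fin.ext h0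
      simp [h0, hj, Fin.ext_iff]
    by_cases h1 : (j:ℕ) = 1
    · have hj : j = (⟨1, by omega⟩ : Fin n) := Fin.ext h1
      simp [h0, h1, hj, Fin.ext_iff, hb]
    · have hj0 : j ≠ (⟨0, by omega⟩ : Fin n) := by simp [Fin.ext_iff, h0]
      have hj1 : j ≠ (⟨1, by omega⟩ : Fin n) := by simp [Fin.ext_iff, h1]
      simp [h0, h1, hj0, hj1, hC]
  unfold Zfun
  rw [Finset.sum_congr rfl (fun j _ => key j), Finset.sum_add_distrib,
    Finset.sum_add_distrib, Finset.sum_const, Finset.sum_ite_eq', Finset.sum_ite_eq']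
  simp only [Finset.mem_univ, if_true, Finset.card_univ, Fintype.card_fin,
    nsmul_eq_mul]
  ring

lemma Zfun_pos (hn : 3 ≤ n) (β : ℝ) : 0 < Zfun n (zex n) β := by
  unfold Zfun
  apply Finset.sum_pos (fun j _ => Real.exp_pos _)
  exact ⟨⟨0, by omega⟩, Finset.mem_univ _⟩

lemma softmax_eq (hn : 3 ≤ n) (β : ℝ) (j : Fin n) :
    softmaxP n (zex n) β j = Real.exp (-(β * gap n (zex n) j)) / Zfun n (zex n) β := by
  unfold softmaxP Zfun
  have hz : ∀ k : Fin n, β * zex n k = -(β * gap n (zex n) k) := by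
    intro k
    unfold gap
    rw [zmax_zex hn]
    ring
  rw [hz j]
  congr 1
  exact Finset.sum_congr rfl fun k _ => by rw [hz k]

end C

section D
variable {n : ℕ}

lemma softmax_i0 (hn : 3 ≤ n) (β : ℝ) :
    softmaxP n (zex n) β (⟨0, by omega⟩ : Fin n) = 1 / Zfun n (zex n) β := by
  rw [softmax_eq hn, gap_zex hn]
  norm_num

lemma softmax_i1 (hn : 3 ≤ n) (β : ℝ) :
    softmaxP n (zex n) β (⟨1, by omega⟩ : Fin n)
      = Real.exp (-(β * (Real.log 2 / Real.log n))) / Zfun n (zex n) β := by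
  rw [softmax_eq hn, gap_zex hn]
  norm_num

lemma softmax_i2 (hn : 3 ≤ n) (β : ℝ) :
    softmaxP n (zex n) β (⟨2, by omega⟩ : Fin n)
      = Real.exp (-(β * Real.log n)) / Zfun n (zex n) β := by
  rw [softmax_eq hn, gap_zex hn]
  norm_num

lemma softmax_bounds (hn : 3 ≤ n) {β : ℝ} (hβ : 0 ≤ β) (j : Fin n) :
    Real.exp (-(β * Real.log n)) / Zfun n (zex n) β ≤ softmaxP n (zex n) β j ∧
    softmaxP n (zex n) β j ≤ 1 / Zfun n (zex n) β := by
  rw [softmax_eq hn]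
  have hZ := Zfun_pos hn β
  constructor
  · apply div_le_div_of_nonneg_right ?_ hZ.le
    exact Real.exp_le_exp.2 (by nlinarith [gap_le hn j])
  · apply div_le_div_of_nonneg_right ?_ hZ.le
    rw [show (1:ℝ) = Real.exp 0 by simp]
    exact Real.exp_le_exp.2 (by nlinarith [gap_nonneg hn j])

end D

section E
variable {n : ℕ}

lemma sSup_softmax (hn : 3 ≤ n) {β : ℝ} (hβ : 0 ≤ β) :
    sSup (Set.range (softmaxP n (zex n) β)) = 1 / Zfun n (zex n) β := by
  apply IsGreatest.csSup_eq
  constructor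
  · exact ⟨⟨0, by omega⟩, softmax_i0 hn β⟩
  · rintro y ⟨j, rfl⟩
    exact (softmax_bounds hn hβ j).2

lemma softmax_vals (hn : 3 ≤ n) (β : ℝ) (j : Fin n) (hj : (j:ℕ) ≠ 0) :
    softmaxP n (zex n) β j = Real.exp (-(β * (Real.log 2 / Real.log n))) / Zfun n (zex n) β ∨
    softmaxP n (zex n) β j = Real.exp (-(β * Real.log n)) / Zfun n (zex n) β := by
  rw [softmax_eq hn, gap_zex hn]
  by_cases h1 : (j:ℕ) = 1
  · left; simp [hj, h1]
  · right; simp [hj, h1]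

lemma exp_ord (hn : 3 ≤ n) {β : ℝ} (hβ : 0 ≤ β) :
    Real.exp (-(β * Real.log n)) ≤ Real.exp (-(β * (Real.log 2 / Real.log n))) ∧
    Real.exp (-(β * (Real.log 2 / Real.log n))) ≤ 1 := by
  constructor
  · exact Real.exp_le_exp.2 (by nlinarith [g2_lt hn])
  · rw [show (1:ℝ) = Real.exp 0 by simp]
    exact Real.exp_le_exp.2 (by nlinarith [g2_pos hn])

lemma secondLargest_softmax (hn : 3 ≤ n) {β : ℝ} (hβ : 0 ≤ β) :
    secondLargest n (softmaxP n (zex n) β)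
      = Real.exp (-(β * (Real.log 2 / Real.log n))) / Zfun n (zex n) β := by
  have hZ := Zfun_pos hn β
  have hord := exp_ord hn hβ
  set b := Real.exp (-(β * (Real.log 2 / Real.log n))) with hb
  have hsup0 : sSup (softmaxP n (zex n) β '' {j | j ≠ (⟨0, by omega⟩ : Fin n)})
      = b / Zfun n (zex n) β := by
    apply IsGreatest.csSup_eq
    constructor
    · exact ⟨⟨1, by omega⟩, by simp [Fin.ext_iff], softmax_i1 hn β⟩
    · rintro y ⟨j, hj, rfl⟩
      have hj0 : (j:ℕ) ≠ 0 := fun h => hj (Fin.ext h)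
      rcases softmax_vals hn β j hj0 with h | h
      · rw [h]
      · rw [h]; exact div_le_div_of_nonneg_right hord.1 hZ.le
  apply IsLeast.csInf_eq
  constructor
  · exact ⟨⟨0, by omega⟩, hsup0⟩
  · rintro y ⟨i, rfl⟩
    show b / Zfun n (zex n) β ≤ sSup (softmaxP n (zex n) β '' {j | j ≠ i})
    by_cases hi : i = (⟨0, by omega⟩ : Fin n)
    · rw [hi, hsup0]
    · have hmem : softmaxP n (zex n) β (⟨0, by omega⟩ : Fin n)
          ∈ softmaxP n (zex n) β '' {j | j ≠ i} := ⟨_, fun h => hi h.symm, rfl⟩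
      have hbdd : BddAbove (softmaxP n (zex n) β '' {j | j ≠ i}) := (Set.toFinite _).bddAbove
      calc b / Zfun n (zex n) β ≤ 1 / Zfun n (zex n) β :=
            div_le_div_of_nonneg_right hord.2 hZ.le
        _ = softmaxP n (zex n) β (⟨0, by omega⟩ : Fin n) := (softmax_i0 hn β).symm
        _ ≤ sSup (softmaxP n (zex n) β '' {j | j ≠ i}) := le_csSup hbdd hmem

lemma Dgap_eq (hn : 3 ≤ n) {β : ℝ} (hβ : 0 ≤ β) :
    Dgap n (zex n) β
      = (1 - Real.exp (-(β * (Real.log 2 / Real.log n)))) / Zfun n (zex n) β := by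
  unfold Dgap
  rw [sSup_softmax hn hβ, secondLargest_softmax hn hβ]
  ring

lemma Ggap_eq (hn : 3 ≤ n) {β : ℝ} (hβ : 0 ≤ β) :
    Ggap n (zex n) β
      = (1 - Real.exp (-(β * Real.log n))) / Zfun n (zex n) β := by
  have hZ := Zfun_pos hn β
  have hord := exp_ord hn hβ
  have hC1 : Real.exp (-(β * Real.log n)) ≤ 1 := le_trans hord.1 hord.2
  have hsplit : (1 - Real.exp (-(β * Real.log n))) / Zfun n (zex n) β
      = 1 / Zfun n (zex n) β - Real.exp (-(β * Real.log n)) / Zfun n (zex n) β := by ring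
  unfold Ggap
  apply IsGreatest.csSup_eq
  constructor
  · refine ⟨⟨0, by omega⟩, ⟨2, by omega⟩, ?_⟩
    rw [softmax_i0 hn β, softmax_i2 hn β, div_sub_div_same,
      abs_of_nonneg (div_nonneg (by linarith) hZ.le)]
  · rintro y ⟨i, j, rfl⟩
    have hi := softmax_bounds hn hβ i
    have hj := softmax_bounds hn hβ j
    rw [abs_sub_le_iff, hsplit]
    constructor
    · linarith [hi.2, hj.1]
    · linarith [hj.2, hi.1]

end E

section F

lemma hlog_atTop : Tendsto (fun n : ℕ => Real.log n) atTop atTop :=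
  Real.tendsto_log_atTop.comp tendsto_natCast_atTop_atTop

lemma hsqrt_atTop : Tendsto Real.sqrt atTop atTop := by
  apply tendsto_atTop_atTop.2
  intro b
  refine ⟨(max b 0)^2, fun a ha => ?_⟩
  calc b ≤ max b 0 := le_max_left _ _
    _ = Real.sqrt ((max b 0)^2) := (Real.sqrt_sq (le_max_right _ _)).symm
    _ ≤ Real.sqrt a := Real.sqrt_le_sqrt ha

lemma hs_atTop : Tendsto (fun n : ℕ => Real.sqrt (Real.log n)) atTop atTop :=
  hsqrt_atTop.comp hlog_atTop

lemma part2 : Tendsto (fun n : ℕ => Real.sqrt (Real.log n) / Real.log n) atTop (nhds 0) := by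
  have h := hs_atTop.inv_tendsto_atTop
  apply h.congr
  intro n
  rw [Pi.inv_apply, eq_comm, Real.sqrt_div_self', one_div]

lemma tends_exp_big : Tendsto (fun n : ℕ =>
    Real.exp (-(Real.sqrt (Real.log n) * Real.log n))) atTop (nhds 0) := by
  have hmul : Tendsto (fun n : ℕ => Real.sqrt (Real.log n) * Real.log n) atTop atTop :=
    hs_atTop.atTop_mul_atTop₀ hlog_atTop
  exact Real.tendsto_exp_atBot.comp (tendsto_neg_atTop_atBot.comp hmul)

lemma tends_A : Tendsto (fun n : ℕ =>
    Real.exp (-(Real.sqrt (Real.log n) * (Real.log 2 / Real.log n)))) atTop (nhds 1) := by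
  have h0 : Tendsto (fun n : ℕ =>
      -(Real.log 2 * (Real.sqrt (Real.log n) / Real.log n))) atTop (nhds 0) := by
    have := (part2.const_mul (Real.log 2)).neg
    simpa using this
  have := (Real.continuous_exp.tendsto 0).comp h0
  simp only [Real.exp_zero] at this
  apply this.congr
  intro n
  simp only [Function.comp_apply]
  ring_nf

lemma tends_B : Tendsto (fun n : ℕ =>
    ((n:ℝ) - 2) * Real.exp (-(Real.sqrt (Real.log n) * Real.log n))) atTop (nhds 0) := by
  have hupper : Tendsto (fun n : ℕ =>
      Real.exp (Real.log n - Real.sqrt (Real.log n) * Real.log n)) atTop (nhds 0) := by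
    have h1 : Tendsto (fun n : ℕ => Real.log n * (Real.sqrt (Real.log n) - 1)) atTop atTop := by
      apply hlog_atTop.atTop_mul_atTop₀
      exact tendsto_atTop_add_const_right atTop (-1) hs_atTop |>.congr (fun n => by ring)
    have h2 : Tendsto (fun n : ℕ =>
        -(Real.log n * (Real.sqrt (Real.log n) - 1))) atTop atBot :=
      tendsto_neg_atTop_atBot.comp h1
    have := Real.tendsto_exp_atBot.comp h2
    apply this.congr
    intro n
    simp only [Function.comp_apply]
    ring_nf
  apply tendsto_of_tendsto_of_tendsto_of_le_of_le' tendsto_const_nhds hupper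
  · filter_upwards [eventually_ge_atTop 2] with n hn
    have : (2:ℝ) ≤ n := by exact_mod_cast hn
    exact mul_nonneg (by linarith) (Real.exp_nonneg _)
  · filter_upwards [eventually_ge_atTop 1] with n hn
    have hpos : (0:ℝ) < n := by exact_mod_cast hn
    have hle : (n:ℝ) - 2 ≤ Real.exp (Real.log n) := by
      rw [Real.exp_log hpos]; linarith
    calc ((n:ℝ) - 2) * Real.exp (-(Real.sqrt (Real.log n) * Real.log n))
        ≤ Real.exp (Real.log n) * Real.exp (-(Real.sqrt (Real.log n) * Real.log n)) :=
          mul_le_mul_of_nonneg_right hle (Real.exp_nonneg _)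
      _ = Real.exp (Real.log n - Real.sqrt (Real.log n) * Real.log n) := by
          rw [← Real.exp_add]; ring_nf

lemma tends_Z : Tendsto (fun n : ℕ =>
    Zfun n (zex n) (Real.sqrt (Real.log n))) atTop (nhds 2) := by
  have h := (tendsto_const_nhds (x := (1:ℝ)) (f := atTop)).add tends_A |>.add tends_B
  norm_num at h
  apply h.congr'
  filter_upwards [eventually_ge_atTop 3] with n hn
  rw [Zfun_eq hn]

lemma tends_D : Tendsto (fun n : ℕ =>
    Dgap n (zex n) (Real.sqrt (Real.log n))) atTop (nhds 0) := by
  have hnum : Tendsto (fun n : ℕ =>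
      1 - Real.exp (-(Real.sqrt (Real.log n) * (Real.log 2 / Real.log n)))) atTop (nhds 0) := by
    have := (tendsto_const_nhds (x := (1:ℝ)) (f := atTop)).sub tends_A
    simpa using this
  have h := hnum.div tends_Z (by norm_num)
  norm_num at h
  apply h.congr'
  filter_upwards [eventually_ge_atTop 3] with n hn
  rw [Pi.div_apply, Dgap_eq hn (Real.sqrt_nonneg _)]

lemma tends_G : Tendsto (fun n : ℕ =>
    Ggap n (zex n) (Real.sqrt (Real.log n))) atTop (nhds (1/2)) := by
  have hnum : Tendsto (fun n : ℕ =>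
      1 - Real.exp (-(Real.sqrt (Real.log n) * Real.log n))) atTop (nhds 1) := by
    have := (tendsto_const_nhds (x := (1:ℝ)) (f := atTop)).sub tends_exp_big
    simpa using this
  have h := hnum.div tends_Z (by norm_num)
  apply h.congr'
  filter_upwards [eventually_ge_atTop 3] with n hn
  rw [Pi.div_apply, Ggap_eq hn (Real.sqrt_nonneg _)]

end F

theorem stmt19 :
    (∀ n : ℕ, 3 ≤ n → IsLUB (lamSet n (zex n)) (Real.log n)) ∧
    Tendsto (fun n : ℕ => Real.sqrt (Real.log n) / Real.log n) atTop (nhds 0) ∧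
    Tendsto (fun n : ℕ => Zfun n (zex n) (Real.sqrt (Real.log n))) atTop (nhds 2) ∧
    Tendsto (fun n : ℕ => Dgap n (zex n) (Real.sqrt (Real.log n))) atTop (nhds 0) ∧
    Tendsto (fun n : ℕ => Ggap n (zex n) (Real.sqrt (Real.log n))) atTop (nhds (1 / 2)) := by
  refine ⟨?_, part2, tends_Z, tends_D, tends_G⟩
  intro n hn
  have := isLUB_lamSet hn
  simpa [lamSet] using this
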